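/- Let μ ∈ ℂ and suppose W ∈ SL(2,ℂ) can be written either as W = X·U·Y_μ·U⁻¹ for some U ∈ SL(2,ℂ), or as W = X·U·X⁻¹·U⁻¹ for some U ∈ SL(2,ℂ). Then the lower-left entry of W equals tr(W) − 2. -/

import Mathlib

open Matrix

noncomputable def X : Matrix.SpecialLinearGroup (Fin 2) ℂ :=
  ⟨!![1, 1; 0, 1], by simp [Matrix.det_fin_two_of]⟩

noncomputable def Y (μ : ℂ) : Matrix.SpecialLinearGroup (Fin 2) ℂ :=
  ⟨!![1, 0; μ, 1], by simp [Matrix.det_fin_two_of]⟩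

/-- If W ∈ SL(2,ℂ) can be written as X·U·Y_μ·U⁻¹ or as X·U·X⁻¹·U⁻¹, then its lower-left
entry equals tr(W) − 2. -/
theorem farey_trace_identity (μ : ℂ) (W : Matrix.SpecialLinearGroup (Fin 2) ℂ)
    (h : (∃ U : Matrix.SpecialLinearGroup (Fin 2) ℂ, W = X * U * Y μ * U⁻¹) ∨
         (∃ U : Matrix.SpecialLinearGroup (Fin 2) ℂ, W = X * U * X⁻¹ * U⁻¹)) :
    (W : Matrix (Fin 2) (Fin 2) ℂ) 1 0 =
      Matrix.trace (W : Matrix (Fin 2) (Fin 2) ℂ) - 2 := by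
  rcases h with ⟨U, rfl⟩ | ⟨U, rfl⟩ <;>
  · have hdet : ((U : Matrix (Fin 2) (Fin 2) ℂ) 0 0) * ((U : Matrix (Fin 2) (Fin 2) ℂ) 1 1)
      - ((U : Matrix (Fin 2) (Fin 2) ℂ) 0 1) * ((U : Matrix (Fin 2) (Fin 2) ℂ) 1 0) = 1 := by
      have := U.2
      rwa [Matrix.det_fin_two] at this
    simp only [Matrix.SpecialLinearGroup.coe_mul, Matrix.SpecialLinearGroup.coe_inv]
    simp only [Matrix.SpecialLinearGroup.coe_mul, Matrix.SpecialLinearGroup.coe_inv,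
      Matrix.adjugate_fin_two, X, Y, Matrix.trace_fin_two, Matrix.mul_apply,
      Fin.sum_univ_two, Matrix.cons_val', Matrix.cons_val_zero, Matrix.cons_val_one,
      Matrix.head_cons, Matrix.head_fin_const, Matrix.cons_val_fin_one, Matrix.of_apply]
    linear_combination (-2 : ℂ) * hdet
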